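/- Let F : ℝ^n → ℝ be convex and differentiable with minimizer x_*. Consider deterministic GPA iterates with μ_x ∈ [0,1), μ_y ∈ [0,1): y^{(t)} = μ_y x^{(t)} + (1-μ_y) z^{(t)}, x^{(t+1)} = μ_x x^{(t)} + (1-μ_x) z^{(t+1)}, where z^{(1)}, ..., z^{(T)} are arbitrary and z^{(1)} = x^{(1)}. Then for the average iterate x̄^{(T)} = (1/T) Σ_{t=1}^T x^{(t)}: F(x̄^{(T)}) - F(x_*) ≤ (1/T) Σ_{t=1}^T ⟨∇F(y^{(t)}), z^{(t)} - x_*⟩ + (μ_x/(1-μ_x)) (1/T) (F(x^{(1)}) - F(x_*)) - (1/((1-μ_y) T)) Σ_t B_F(y^{(t)}, x^{(t)}) - (μ_y/((1-μ_y) T)) Σ_t B_F(x^{(t)}, y^{(t)}) - (μ_x/((1-μ_x) T)) Σ_t B_F(x^{(t-1)}, x^{(t)}). -/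

import Mathlib

open RealInnerProductSpace

/-- Bregman divergence of `F` with gradient map `F'`. -/
noncomputable def bregman {n : ℕ} (F : EuclideanSpace ℝ (Fin n) → ℝ)
    (F' : EuclideanSpace ℝ (Fin n) → EuclideanSpace ℝ (Fin n))
    (a b : EuclideanSpace ℝ (Fin n)) : ℝ :=
  F a - F b - ⟪F' b, a - b⟫

/-- Gradient inequality for convex functions: `F b + ⟪∇F b, a - b⟫ ≤ F a`. -/
lemma gpa_grad_ineq {n : ℕ} {F : EuclideanSpace ℝ (Fin n) → ℝ}
    (hconv : ConvexOn ℝ Set.univ F) {g b : EuclideanSpace ℝ (Fin n)}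
    (hg : HasGradientAt F g b) (a : EuclideanSpace ℝ (Fin n)) :
    ⟪g, a - b⟫ ≤ F a - F b := by
  set φ : ℝ → ℝ := fun t => F (b + t • (a - b)) with hφ
  have hφconv : ConvexOn ℝ Set.univ φ := by
    have h := hconv.comp_affineMap (AffineMap.lineMap b a : ℝ →ᵃ[ℝ] _)
    have heq : φ = F ∘ (AffineMap.lineMap b a : ℝ →ᵃ[ℝ] _) := by
      funext t
      simp [hφ, AffineMap.lineMap_apply, add_comm]
    rw [heq]
    simpa using h
  have hc : HasDerivAt (fun t : ℝ => b + t • (a - b)) (a - b) 0 := by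
    simpa using ((hasDerivAt_id (0:ℝ)).smul_const (a - b)).const_add b
  have hF : HasFDerivAt F ((InnerProductSpace.toDual ℝ _) g) b :=
    hasGradientAt_iff_hasFDerivAt.mp hg
  have hder : HasDerivAt φ ⟪g, a - b⟫ 0 := by
    have h0 : b + (0:ℝ) • (a - b) = b := by simp
    have hF' : HasFDerivAt F ((InnerProductSpace.toDual ℝ _) g) (b + (0:ℝ) • (a - b)) := by
      rw [h0]; exact hF
    have hcomp := hF'.comp_hasDerivAt (0:ℝ) hc
    simp only [InnerProductSpace.toDual_apply_apply] at hcomp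
    exact hcomp
  have := hφconv.le_slope_of_hasDerivAt (Set.mem_univ 0) (Set.mem_univ 1) one_pos hder
  rw [slope_def_field] at this
  simpa [hφ] using this

lemma gpa_telescope (f : ℕ → ℝ) (T : ℕ) :
    ∑ t ∈ Finset.Icc 1 T, (f t - f (t - 1)) = f T - f 0 := by
  induction T with
  | zero => simp
  | succ T ih =>
    rw [Finset.sum_Icc_succ_top (by omega), ih]
    simp

/-- The exact per-iteration identity for GPA. -/
lemma gpa_per_t {n : ℕ} (μx μy : ℝ) (h1y : (1:ℝ) - μy ≠ 0)
    (F : EuclideanSpace ℝ (Fin n) → ℝ)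
    (F' : EuclideanSpace ℝ (Fin n) → EuclideanSpace ℝ (Fin n))
    (xt xp yt zt xstar : EuclideanSpace ℝ (Fin n))
    (hz : zt - xt = (μx / (1 - μx)) • (xt - xp))
    (hyx : yt - xt = (1 - μy) • (zt - xt)) :
    ⟪F' yt, zt - xstar⟫ = (F xt - F xstar)
      + (1 / (1 - μy)) * bregman F F' yt xt
      + (μy / (1 - μy)) * bregman F F' xt yt
      + (μx / (1 - μx)) * (F xt - F xp)
      + (μx / (1 - μx)) * bregman F F' xp xt
      + bregman F F' xstar yt := by
  set c := μx / (1 - μx) with hc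
  have hyt : yt - xt = ((1 - μy) * c) • (xt - xp) := by
    rw [hyx, hz, smul_smul]
  have e1 : zt - xstar = (xt - xstar) + c • (xt - xp) := by
    rw [← hz]; abel
  have e3 : xt - yt = -(((1 - μy) * c) • (xt - xp)) := by
    rw [← hyt]; abel
  have e4 : xstar - yt = (xstar - xt) - ((1 - μy) * c) • (xt - xp) := by
    rw [← hyt]; abel
  have e5 : xp - xt = -(xt - xp) := by abel
  simp only [bregman]
  rw [e1, hyt, e3, e4, e5]
  simp only [inner_add_right, inner_sub_right, inner_neg_right, real_inner_smul_right]
  field_simp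
  ring

/-- Convergence bound for (deterministic) Generalized Primal Averaging:
the average iterate's suboptimality is bounded by the average regret of the base
optimizer plus a `1/T` term, minus nonnegative Bregman divergence terms. -/
theorem gpa_convergence_bound
    (n : ℕ) (μx μy : ℝ) (hμx0 : 0 ≤ μx) (hμx1 : μx < 1) (hμy0 : 0 ≤ μy) (hμy1 : μy < 1)
    (F : EuclideanSpace ℝ (Fin n) → ℝ)
    (F' : EuclideanSpace ℝ (Fin n) → EuclideanSpace ℝ (Fin n))
    (hgrad : ∀ p, HasGradientAt F (F' p) p)
    (hconv : ConvexOn ℝ Set.univ F)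
    (xstar : EuclideanSpace ℝ (Fin n)) (hmin : ∀ p, F xstar ≤ F p)
    (x y z : ℕ → EuclideanSpace ℝ (Fin n))
    (hy : ∀ t ≥ 1, y t = μy • x t + (1 - μy) • z t)
    (hx : ∀ t ≥ 1, x (t + 1) = μx • x t + (1 - μx) • z (t + 1))
    (hinit : z 1 = x 1) (hconv0 : x 0 = x 1)
    (T : ℕ) (hT : 1 ≤ T) :
    F ((1 / (T : ℝ)) • ∑ t ∈ Finset.Icc 1 T, x t) - F xstar ≤
      (1 / (T : ℝ)) * ∑ t ∈ Finset.Icc 1 T, ⟪F' (y t), z t - xstar⟫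
      + (μx / (1 - μx)) * (1 / (T : ℝ)) * (F (x 1) - F xstar)
      - (1 / ((1 - μy) * T)) * ∑ t ∈ Finset.Icc 1 T, bregman F F' (y t) (x t)
      - (μy / ((1 - μy) * T)) * ∑ t ∈ Finset.Icc 1 T, bregman F F' (x t) (y t)
      - (μx / ((1 - μx) * T)) * ∑ t ∈ Finset.Icc 1 T, bregman F F' (x (t - 1)) (x t) := by
  have h1x : (0:ℝ) < 1 - μx := by linarith
  have h1y : (0:ℝ) < 1 - μy := by linarith
  have hc0 : (0:ℝ) ≤ μx / (1 - μx) := div_nonneg hμx0 h1x.le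
  have hTpos : (0:ℝ) < (T:ℝ) := by exact_mod_cast hT
  have hbreg : ∀ a b, 0 ≤ bregman F F' a b := by
    intro a b
    have := gpa_grad_ineq hconv (hgrad b) a
    simp only [bregman]
    linarith
  -- key vector recurrences
  have hzx : ∀ t ∈ Finset.Icc 1 T, z t - x t = (μx/(1-μx)) • (x t - x (t-1)) := by
    intro t ht
    rw [Finset.mem_Icc] at ht
    rcases eq_or_lt_of_le ht.1 with h1 | h2
    · rw [← h1]
      simp [hinit, ← hconv0]
    · have h2' : 1 ≤ t - 1 := by omega
      have hxe := hx (t-1) h2'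
      rw [Nat.sub_add_cancel (by omega)] at hxe
      have key : (1-μx) • (z t - x t) = μx • (x t - x (t-1)) := by
        rw [hxe]; module
      rw [div_eq_inv_mul, ← smul_smul, ← key, smul_smul, inv_mul_cancel₀ h1x.ne', one_smul]
  have hyx : ∀ t ∈ Finset.Icc 1 T, y t - x t = (1-μy) • (z t - x t) := by
    intro t ht
    rw [Finset.mem_Icc] at ht
    rw [hy t ht.1]; module
  have key : ∀ t ∈ Finset.Icc 1 T,
      ⟪F' (y t), z t - xstar⟫ = (F (x t) - F xstar)
        + (1 / (1 - μy)) * bregman F F' (y t) (x t)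
        + (μy / (1 - μy)) * bregman F F' (x t) (y t)
        + (μx / (1 - μx)) * (F (x t) - F (x (t-1)))
        + (μx / (1 - μx)) * bregman F F' (x (t-1)) (x t)
        + bregman F F' xstar (y t) := fun t ht =>
    gpa_per_t μx μy h1y.ne' F F' (x t) (x (t-1)) (y t) (z t) xstar (hzx t ht) (hyx t ht)
  have sum_eq : ∑ t ∈ Finset.Icc 1 T, ⟪F' (y t), z t - xstar⟫
      = (∑ t ∈ Finset.Icc 1 T, F (x t)) - T * F xstar
        + (1/(1-μy)) * ∑ t ∈ Finset.Icc 1 T, bregman F F' (y t) (x t)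
        + (μy/(1-μy)) * ∑ t ∈ Finset.Icc 1 T, bregman F F' (x t) (y t)
        + (μx/(1-μx)) * (F (x T) - F (x 0))
        + (μx/(1-μx)) * ∑ t ∈ Finset.Icc 1 T, bregman F F' (x (t-1)) (x t)
        + ∑ t ∈ Finset.Icc 1 T, bregman F F' xstar (y t) := by
    rw [Finset.sum_congr rfl key]
    rw [← gpa_telescope (fun t => F (x t)) T]
    rw [Finset.sum_add_distrib, Finset.sum_add_distrib, Finset.sum_add_distrib,
      Finset.sum_add_distrib, Finset.sum_add_distrib, Finset.sum_sub_distrib,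
      ← Finset.mul_sum, ← Finset.mul_sum, ← Finset.mul_sum, ← Finset.mul_sum,
      Finset.sum_const, Nat.card_Icc, nsmul_eq_mul]
    push_cast [Nat.add_sub_cancel]
    ring
  -- Jensen's inequality
  have jensen : F ((1 / (T : ℝ)) • ∑ t ∈ Finset.Icc 1 T, x t)
      ≤ ∑ t ∈ Finset.Icc 1 T, (1/(T:ℝ)) * F (x t) := by
    have hw1 : ∑ _i ∈ Finset.Icc 1 T, (1/(T:ℝ)) = 1 := by
      rw [Finset.sum_const, Nat.card_Icc, nsmul_eq_mul]
      push_cast [Nat.add_sub_cancel]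
      field_simp
    have h := hconv.map_sum_le (f := F) (fun i _ => by positivity) hw1
      (fun i _ => Set.mem_univ (x i))
    rwa [← Finset.smul_sum] at h
  -- main estimate on the sum
  have hstep : (∑ t ∈ Finset.Icc 1 T, F (x t)) - T * F xstar ≤
      (∑ t ∈ Finset.Icc 1 T, ⟪F' (y t), z t - xstar⟫)
      + (μx/(1-μx)) * (F (x 1) - F xstar)
      - (1/(1-μy)) * ∑ t ∈ Finset.Icc 1 T, bregman F F' (y t) (x t)
      - (μy/(1-μy)) * ∑ t ∈ Finset.Icc 1 T, bregman F F' (x t) (y t)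
      - (μx/(1-μx)) * ∑ t ∈ Finset.Icc 1 T, bregman F F' (x (t-1)) (x t) := by
    have hS4 : 0 ≤ ∑ t ∈ Finset.Icc 1 T, bregman F F' xstar (y t) :=
      Finset.sum_nonneg (fun t _ => hbreg _ _)
    have hxT : F xstar ≤ F (x T) := hmin _
    have h5 := mul_le_mul_of_nonneg_left hxT hc0
    rw [hconv0] at sum_eq
    linarith [sum_eq]
  have hinv : (0:ℝ) ≤ 1/(T:ℝ) := by positivity
  have hj2 := mul_le_mul_of_nonneg_left hstep hinv
  have heq1 : (∑ t ∈ Finset.Icc 1 T, (1/(T:ℝ)) * F (x t)) - F xstar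
      = (1/(T:ℝ)) * ((∑ t ∈ Finset.Icc 1 T, F (x t)) - T * F xstar) := by
    rw [← Finset.mul_sum]
    field_simp
  have heq2 : (1/(T:ℝ)) * ((∑ t ∈ Finset.Icc 1 T, ⟪F' (y t), z t - xstar⟫)
      + (μx/(1-μx)) * (F (x 1) - F xstar)
      - (1/(1-μy)) * ∑ t ∈ Finset.Icc 1 T, bregman F F' (y t) (x t)
      - (μy/(1-μy)) * ∑ t ∈ Finset.Icc 1 T, bregman F F' (x t) (y t)
      - (μx/(1-μx)) * ∑ t ∈ Finset.Icc 1 T, bregman F F' (x (t-1)) (x t))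
      = (1 / (T : ℝ)) * ∑ t ∈ Finset.Icc 1 T, ⟪F' (y t), z t - xstar⟫
      + (μx / (1 - μx)) * (1 / (T : ℝ)) * (F (x 1) - F xstar)
      - (1 / ((1 - μy) * T)) * ∑ t ∈ Finset.Icc 1 T, bregman F F' (y t) (x t)
      - (μy / ((1 - μy) * T)) * ∑ t ∈ Finset.Icc 1 T, bregman F F' (x t) (y t)
      - (μx / ((1 - μx) * T)) * ∑ t ∈ Finset.Icc 1 T, bregman F F' (x (t - 1)) (x t) := by
    field_simp
  calc F ((1 / (T : ℝ)) • ∑ t ∈ Finset.Icc 1 T, x t) - F xstar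
      ≤ (∑ t ∈ Finset.Icc 1 T, (1/(T:ℝ)) * F (x t)) - F xstar := by linarith [jensen]
    _ = (1/(T:ℝ)) * ((∑ t ∈ Finset.Icc 1 T, F (x t)) - T * F xstar) := heq1
    _ ≤ _ := le_of_le_of_eq hj2 heq2
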